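/- Let X = X₁ × ⋯ × X_n with |X_i| ≥ 2, let 1 ≤ k ≤ n, and let A ∈ ℝ^{a×X} have rows spanning V_k(X). Let Y = Y₁ × ⋯ × Y_m with |Y_j| ≥ 2, and let B ∈ ℝ^{b×Y} have rows spanning V_1(Y). Suppose X can be covered by Hamming balls K¹,…,Kᵐ (of arbitrary radii) such that, for each j, K^j can be covered by |Y_j|−1 radius-k Hamming balls. Then max_{θ∈ℝ^{ab}} rank(𝒜_θ) = |X|. -/

import Mathlib

open scoped Classical BigOperators

/-- `V_k(X)`: the span of all functions on `X = ∏ i, X_i` depending on at most `k`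
coordinates. -/
noncomputable def Vk (n : ℕ) (q : Fin n → ℕ) (k : ℕ) :
    Submodule ℝ ((∀ i, Fin (q i)) → ℝ) :=
  Submodule.span ℝ
    {f : (∀ i, Fin (q i)) → ℝ | ∃ s : Finset (Fin n), s.card ≤ k ∧
      ∀ x x' : ∀ i, Fin (q i), (∀ i ∈ s, x i = x' i) → f x = f x'}

/-- The argmax (inference) set `h_θ(x) = argmax_{y} ⟨θ, A_x ⊗ B_y⟩`. -/
noncomputable def infSet {a bn : ℕ} {X Y : Type*} [Fintype Y]
    (A : Matrix (Fin a) X ℝ) (B : Matrix (Fin bn) Y ℝ)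
    (θ : Fin a × Fin bn → ℝ) (x : X) : Finset Y :=
  Finset.univ.filter (fun y : Y => ∀ y' : Y,
    ∑ s : Fin a × Fin bn, θ s * (A s.1 x * B s.2 y') ≤
      ∑ s : Fin a × Fin bn, θ s * (A s.1 x * B s.2 y))

/-- The tropical morphism matrix `𝒜_θ` with columns
`A_x ⊗ ((1/|h_θ(x)|) ∑_{y ∈ h_θ(x)} B_y)`. -/
noncomputable def tropMat {a bn : ℕ} {X Y : Type*} [Fintype Y]
    (A : Matrix (Fin a) X ℝ) (B : Matrix (Fin bn) Y ℝ)
    (θ : Fin a × Fin bn → ℝ) : Matrix (Fin a × Fin bn) X ℝ :=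
  fun p x =>
    A p.1 x * (((infSet A B θ x).card : ℝ)⁻¹ * ∑ y ∈ infSet A B θ x, B p.2 y)

open scoped Pointwise

/-- Precomposition preserves span membership. -/
lemma comp_mem_span {X Z ι : Type*} (u : ι → X → ℝ) (τ : Z → X)
    {f : X → ℝ} (hf : f ∈ Submodule.span ℝ (Set.range u)) :
    (fun z => f (τ z)) ∈ Submodule.span ℝ (Set.range fun i => fun z => u i (τ z)) := by
  have := Submodule.mem_map_of_mem (f := LinearMap.funLeft ℝ ℝ τ) hf
  rw [Submodule.map_span, ← Set.range_comp] at this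
  exact this

/-- Pointwise product of span members is in the span of pairwise products. -/
lemma mul_mem_span_prod {ι κ Z : Type*} (u : ι → Z → ℝ) (w : κ → Z → ℝ) {f g : Z → ℝ}
    (hf : f ∈ Submodule.span ℝ (Set.range u))
    (hg : g ∈ Submodule.span ℝ (Set.range w)) :
    (fun z => f z * g z) ∈ Submodule.span ℝ
      (Set.range fun s : ι × κ => fun z => u s.1 z * w s.2 z) := by
  have hmul : (f * g) ∈ Submodule.span ℝ (Set.range u) * Submodule.span ℝ (Set.range w) :=
    Submodule.mul_mem_mul hf hg
  rw [Submodule.span_mul_span] at hmul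
  have hset : Set.range u * Set.range w =
      Set.range fun s : ι × κ => fun z => u s.1 z * w s.2 z := by
    ext h
    constructor
    · rintro ⟨f₁, ⟨i, rfl⟩, f₂, ⟨j, rfl⟩, rfl⟩
      exact ⟨(i, j), rfl⟩
    · rintro ⟨⟨i, j⟩, rfl⟩
      exact ⟨u i, ⟨i, rfl⟩, w j, ⟨j, rfl⟩, rfl⟩
  rw [hset] at hmul
  exact hmul

noncomputable def selN {n m : ℕ} {q : Fin n → ℕ} {r : Fin m → ℕ}
    (k : ℕ) (c : ∀ j : Fin m, Fin (r j - 1) → ∀ i, Fin (q i))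
    (j : Fin m) (x : ∀ i, Fin (q i)) (v : Fin (r j)) : ℕ :=
  if h : (v : ℕ) < r j - 1 then 2 * r j * hammingDist x (c j ⟨v, h⟩) + (v + 1)
  else 2 * r j * k + r j

lemma selN_injective {n m : ℕ} {q : Fin n → ℕ} {r : Fin m → ℕ}
    (k : ℕ) (c : ∀ j : Fin m, Fin (r j - 1) → ∀ i, Fin (q i))
    (j : Fin m) (x : ∀ i, Fin (q i)) :
    Function.Injective (selN k c j x) := by
  intro v v' h
  have hv := v.isLt; have hv' := v'.isLt
  have key : ∀ w : Fin (r j), (selN k c j x w) % (2 * r j) =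
      if (w : ℕ) < r j - 1 then (w : ℕ) + 1 else r j := by
    intro w
    unfold selN
    split_ifs with hw
    · rw [Nat.mul_add_mod]
      exact Nat.mod_eq_of_lt (by omega)
    · rw [Nat.mul_add_mod]
      exact Nat.mod_eq_of_lt (by omega)
  have h2 : (selN k c j x v) % (2 * r j) = (selN k c j x v') % (2 * r j) := by rw [h]
  rw [key v, key v'] at h2
  split_ifs at h2 with h3 h4 h4
  · exact Fin.ext (by omega)
  · omega
  · omega
  · exact Fin.ext (by omega)

lemma exists_sel {n m : ℕ} {q : Fin n → ℕ} {r : Fin m → ℕ}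
    (k : ℕ) (c : ∀ j : Fin m, Fin (r j - 1) → ∀ i, Fin (q i))
    (hr : ∀ j, 2 ≤ r j) (j : Fin m) (x : ∀ i, Fin (q i)) :
    ∃ v : Fin (r j), ∀ v', selN k c j x v ≤ selN k c j x v' := by
  have hne : (Finset.univ : Finset (Fin (r j))).Nonempty :=
    ⟨⟨0, by have := hr j; omega⟩, Finset.mem_univ _⟩
  obtain ⟨b, _, hb⟩ := Finset.exists_min_image Finset.univ (selN k c j x) hne
  exact ⟨b, fun v' => hb v' (Finset.mem_univ _)⟩

noncomputable def sel {n m : ℕ} {q : Fin n → ℕ} {r : Fin m → ℕ}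
    (k : ℕ) (c : ∀ j : Fin m, Fin (r j - 1) → ∀ i, Fin (q i))
    (hr : ∀ j, 2 ≤ r j) (j : Fin m) (x : ∀ i, Fin (q i)) : Fin (r j) :=
  Classical.choose (exists_sel k c hr j x)

lemma sel_min {n m : ℕ} {q : Fin n → ℕ} {r : Fin m → ℕ}
    (k : ℕ) (c : ∀ j : Fin m, Fin (r j - 1) → ∀ i, Fin (q i))
    (hr : ∀ j, 2 ≤ r j) (j : Fin m) (x : ∀ i, Fin (q i)) (v : Fin (r j)) :
    selN k c j x (sel k c hr j x) ≤ selN k c j x v :=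
  Classical.choose_spec (exists_sel k c hr j x) v

lemma sel_unique {n m : ℕ} {q : Fin n → ℕ} {r : Fin m → ℕ}
    (k : ℕ) (c : ∀ j : Fin m, Fin (r j - 1) → ∀ i, Fin (q i))
    (hr : ∀ j, 2 ≤ r j) (j : Fin m) (x : ∀ i, Fin (q i)) (v : Fin (r j))
    (hv : ∀ v', selN k c j x v ≤ selN k c j x v') : v = sel k c hr j x := by
  apply selN_injective k c j x
  exact le_antisymm (hv _) (sel_min k c hr j x v)

lemma sel_center_dist {n m : ℕ} {q : Fin n → ℕ} {r : Fin m → ℕ}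
    (k : ℕ) (c : ∀ j : Fin m, Fin (r j - 1) → ∀ i, Fin (q i))
    (hr : ∀ j, 2 ≤ r j) (j : Fin m) (x : ∀ i, Fin (q i))
    (h : ((sel k c hr j x : Fin (r j)) : ℕ) < r j - 1) :
    hammingDist x (c j ⟨sel k c hr j x, h⟩) ≤ k := by
  have hfar : selN k c j x ⟨r j - 1, by have := hr j; omega⟩ = 2 * r j * k + r j := by
    unfold selN; rw [dif_neg (by simp)]
  have hmin := sel_min k c hr j x ⟨r j - 1, by have := hr j; omega⟩
  rw [hfar] at hmin
  have hsel : selN k c j x (sel k c hr j x) =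
      2 * r j * hammingDist x (c j ⟨sel k c hr j x, h⟩) + ((sel k c hr j x : ℕ) + 1) := by
    unfold selN; rw [dif_pos h]
  rw [hsel] at hmin
  by_contra hd
  have h1 : k + 1 ≤ hammingDist x (c j ⟨sel k c hr j x, h⟩) := by omega
  have h2 := Nat.mul_le_mul_left (2 * r j) h1
  have hrj := hr j
  nlinarith [hrj]

lemma sel_is_center {n m : ℕ} {q : Fin n → ℕ} {r : Fin m → ℕ}
    (k : ℕ) (c : ∀ j : Fin m, Fin (r j - 1) → ∀ i, Fin (q i))
    (hr : ∀ j, 2 ≤ r j) (j : Fin m) (x : ∀ i, Fin (q i))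
    (hnear : ∃ i : Fin (r j - 1), hammingDist x (c j i) ≤ k) :
    ((sel k c hr j x : Fin (r j)) : ℕ) < r j - 1 := by
  by_contra hfar
  obtain ⟨i, hi⟩ := hnear
  have hrj := hr j
  have hiv : ((i : ℕ) : ℕ) < r j - 1 := i.isLt
  have hvlt : (i : ℕ) < r j := by omega
  have hminle := sel_min k c hr j x ⟨i, hvlt⟩
  have hselfar : selN k c j x (sel k c hr j x) = 2 * r j * k + r j := by
    unfold selN; rw [dif_neg hfar]
  have hcen : selN k c j x ⟨i, hvlt⟩ =
      2 * r j * hammingDist x (c j ⟨i, by simp⟩) + ((i : ℕ) + 1) := by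
    unfold selN; rw [dif_pos (by simp)]
  rw [hselfar, hcen] at hminle
  have h1 : 2 * r j * hammingDist x (c j ⟨i, by simp⟩) ≤ 2 * r j * k :=
    Nat.mul_le_mul_left _ (by simpa using hi)
  omega

lemma const_mem_Vk {n : ℕ} {q : Fin n → ℕ} {k : ℕ} (a : ℝ) :
    (fun _ => a) ∈ Vk n q k :=
  Submodule.subset_span ⟨∅, by simp, fun _ _ _ => rfl⟩

lemma single_coord_mem_Vk {n : ℕ} {q : Fin n → ℕ} {k : ℕ} (hk : 1 ≤ k)
    (i : Fin n) (g : Fin (q i) → ℝ) : (fun x => g (x i)) ∈ Vk n q k :=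
  Submodule.subset_span ⟨{i}, by simpa using hk,
    fun x x' h => by simp only [h i (Finset.mem_singleton_self i)]⟩

lemma hamming_cast {n : ℕ} {q : Fin n → ℕ} (x y : ∀ i, Fin (q i)) :
    (hammingDist x y : ℝ) = ∑ i, if x i = y i then 0 else 1 := by
  rw [hammingDist, Finset.card_filter]
  push_cast
  exact Finset.sum_congr rfl fun i _ => by by_cases h : x i = y i <;> simp [h]

lemma negSelN_mem_Vk {n m : ℕ} {q : Fin n → ℕ} {r : Fin m → ℕ}
    {k : ℕ} (hk : 1 ≤ k) (c : ∀ j : Fin m, Fin (r j - 1) → ∀ i, Fin (q i))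
    (j : Fin m) (v : Fin (r j)) :
    (fun x => -(selN k c j x v : ℝ)) ∈ Vk n q k := by
  by_cases h : (v : ℕ) < r j - 1
  · have heq : (fun x => -(selN k c j x v : ℝ)) =
        (fun _ => -((v : ℝ) + 1)) +
          ∑ i : Fin n, (fun x : ∀ i, Fin (q i) =>
            if x i = c j ⟨v, h⟩ i then (0:ℝ) else -(2 * r j)) := by
      funext x1
      have hsum : ∑ i, (if x1 i = c j ⟨v, h⟩ i then (0:ℝ) else -(2 * r j)) =
          -(2 * (r j : ℝ)) * hammingDist x1 (c j ⟨v, h⟩) := by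
        rw [hamming_cast, Finset.mul_sum]
        exact Finset.sum_congr rfl fun i _ => by split_ifs <;> ring
      simp only [Pi.add_apply, Finset.sum_apply]
      rw [hsum, selN, dif_pos h]
      push_cast
      ring
    rw [heq]
    exact Submodule.add_mem _ (const_mem_Vk _)
      (Submodule.sum_mem _ fun i _ => single_coord_mem_Vk hk i
        (fun t => if t = c j ⟨v, h⟩ i then (0:ℝ) else -(2 * r j)))
  · have heq : (fun x => -(selN k c j x v : ℝ)) =
        (fun _ => -((2 * r j * k + r j : ℕ) : ℝ)) := by
      funext x1; rw [selN, dif_neg h]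
    rw [heq]; exact const_mem_Vk _

/-- Visible `k`-interaction model, hidden independence model: if `X`
can be covered by Hamming balls `K¹,…,Kᵐ` such that each `K^j` can be covered by
`|Y_j|−1` radius-`k` Hamming balls, then `max_θ rank 𝒜_θ = |X|`. -/
theorem tropical_hadamard_mixture_k_interaction_covering
    (n : ℕ) (q : Fin n → ℕ) (hq : ∀ i, 2 ≤ q i)
    (k : ℕ) (hk1 : 1 ≤ k) (hkn : k ≤ n)
    (a : ℕ) (A : Matrix (Fin a) (∀ i, Fin (q i)) ℝ)
    (hA : Submodule.span ℝ (Set.range A) = Vk n q k)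
    (m : ℕ) (r : Fin m → ℕ) (hr : ∀ j, 2 ≤ r j)
    (bn : ℕ) (B : Matrix (Fin bn) (∀ j, Fin (r j)) ℝ)
    (hB : Submodule.span ℝ (Set.range B) = Vk m r 1)
    (d : Fin m → ∀ i, Fin (q i)) (ρ : Fin m → ℕ)
    (hKcov : ∀ x : ∀ i, Fin (q i), ∃ j : Fin m, hammingDist x (d j) ≤ ρ j)
    (c : ∀ j : Fin m, Fin (r j - 1) → ∀ i, Fin (q i))
    (hccov : ∀ (j : Fin m) (x : ∀ i, Fin (q i)), hammingDist x (d j) ≤ ρ j →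
      ∃ i : Fin (r j - 1), hammingDist x (c j i) ≤ k) :
    IsGreatest {s : ℕ | ∃ θ : Fin a × Fin bn → ℝ, s = (tropMat A B θ).rank}
      (Fintype.card (∀ i, Fin (q i))) := by
  -- the target score function is realizable by some θ
  have hF : (fun p : (∀ i, Fin (q i)) × (∀ j, Fin (r j)) =>
        ∑ j, -(selN k c j p.1 (p.2 j) : ℝ)) ∈ Submodule.span ℝ
      (Set.range fun s : Fin a × Fin bn =>
        fun p : (∀ i, Fin (q i)) × (∀ j, Fin (r j)) => A s.1 p.1 * B s.2 p.2) := by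
    have hFsum : (fun p : (∀ i, Fin (q i)) × (∀ j, Fin (r j)) =>
          ∑ j, -(selN k c j p.1 (p.2 j) : ℝ)) = ∑ j : Fin m, ∑ v : Fin (r j),
        (fun p : (∀ i, Fin (q i)) × (∀ j, Fin (r j)) =>
          (-(selN k c j p.1 v : ℝ)) * (if p.2 j = v then 1 else 0)) := by
      funext p
      simp only [Finset.sum_apply]
      refine Finset.sum_congr rfl fun j _ => ?_
      rw [Finset.sum_eq_single (p.2 j)]
      · simp
      · intro v _ hv
        simp [Ne.symm hv]
      · simp
    rw [hFsum]
    refine Submodule.sum_mem _ fun j _ => Submodule.sum_mem _ fun v _ => ?_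
    refine mul_mem_span_prod
      (fun i : Fin a => fun p : (∀ i, Fin (q i)) × (∀ j, Fin (r j)) => A i p.1)
      (fun t : Fin bn => fun p : (∀ i, Fin (q i)) × (∀ j, Fin (r j)) => B t p.2) ?_ ?_
    · exact comp_mem_span A Prod.fst (by rw [hA]; exact negSelN_mem_Vk hk1 c j v)
    · exact comp_mem_span B Prod.snd
        (by rw [hB]; exact single_coord_mem_Vk le_rfl j (fun t => if t = v then (1:ℝ) else 0))
  obtain ⟨θ, hθ0⟩ := (Submodule.mem_span_range_iff_exists_fun ℝ).1 hF
  have hθ : ∀ (x : ∀ i, Fin (q i)) (y : ∀ j, Fin (r j)),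
      ∑ s : Fin a × Fin bn, θ s * (A s.1 x * B s.2 y) =
        ∑ j, -(selN k c j x (y j) : ℝ) := by
    intro x y
    have := congrFun hθ0 (x, y)
    simpa [Finset.sum_apply, smul_eq_mul] using this
  -- the inferred y
  set ystar : (∀ i, Fin (q i)) → (∀ j, Fin (r j)) := fun x j => sel k c hr j x with hystar
  have hinf : ∀ x, infSet A B θ x = {ystar x} := by
    intro x
    ext y
    simp only [infSet, Finset.mem_filter, Finset.mem_univ, true_and, Finset.mem_singleton]
    constructor
    · intro hy
      funext j
      have hy' := hy (Function.update y j (sel k c hr j x))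
      rw [hθ, hθ] at hy'
      have hfun : (fun j' => -(selN k c j' x (Function.update y j (sel k c hr j x) j') : ℝ)) =
          Function.update (fun j' => -(selN k c j' x (y j') : ℝ)) j
            (-(selN k c j x (sel k c hr j x) : ℝ)) := by
        funext j'
        by_cases hj : j' = j
        · subst hj; simp
        · simp [Function.update_of_ne hj]
      rw [show (∑ j', -(selN k c j' x (Function.update y j (sel k c hr j x) j') : ℝ)) =
          ∑ j', Function.update (fun j' => -(selN k c j' x (y j') : ℝ)) j
            (-(selN k c j x (sel k c hr j x) : ℝ)) j' from by rw [← hfun]] at hy'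
      rw [Finset.sum_update_of_mem (Finset.mem_univ j)] at hy'
      rw [← Finset.add_sum_erase _ _ (Finset.mem_univ j), Finset.erase_eq] at hy'
      have hle : (selN k c j x (y j) : ℝ) ≤ (selN k c j x (sel k c hr j x) : ℝ) := by linarith
      have hle' : selN k c j x (y j) ≤ selN k c j x (sel k c hr j x) := by exact_mod_cast hle
      exact sel_unique k c hr j x (y j) (fun v' => le_trans hle' (sel_min k c hr j x v'))
    · rintro rfl
      intro y'
      rw [hθ, hθ]
      refine Finset.sum_le_sum fun j _ => ?_
      have := sel_min k c hr j x (y' j)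
      exact neg_le_neg (by exact_mod_cast this)
  -- tropMat columns
  have htrop : tropMat A B θ = fun s : Fin a × Fin bn => fun x =>
      A s.1 x * B s.2 (ystar x) := by
    funext s x
    rw [tropMat, hinf]
    simp
  -- row span is everything
  have hsingle : ∀ x : ∀ i, Fin (q i), (Pi.single x (1:ℝ) : (∀ i, Fin (q i)) → ℝ) ∈
      Submodule.span ℝ (Set.range fun s : Fin a × Fin bn => fun x' =>
        A s.1 x' * B s.2 (ystar x')) := by
    intro x
    obtain ⟨j, hj⟩ := hKcov x
    have hnear := hccov j x hj
    have hcen : ((sel k c hr j x : Fin (r j)) : ℕ) < r j - 1 := sel_is_center k c hr j x hnear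
    have hdx : hammingDist x (c j ⟨sel k c hr j x, hcen⟩) ≤ k := sel_center_dist k c hr j x hcen
    set y0 : Fin (r j) := sel k c hr j x with hy0
    set c0 : ∀ i, Fin (q i) := c j ⟨y0, hcen⟩ with hc0
    set S : Finset (Fin n) := Finset.univ.filter (fun i => x i ≠ c0 i) with hS
    have hdS : hammingDist x c0 = S.card := rfl
    have hScard : S.card ≤ k := hdS ▸ hdx
    -- inclusion–exclusion identity for the point indicator
    have hkey : (Pi.single x (1:ℝ) : (∀ i, Fin (q i)) → ℝ) =
        ∑ T ∈ Sᶜ.powerset, ((-1:ℝ))^T.card •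
          (fun x' => ((∏ i ∈ S, if x' i = x i then (1:ℝ) else 0) *
            ∏ i ∈ T, if x' i = c0 i then (0:ℝ) else 1) *
            (if ystar x' j = y0 then (1:ℝ) else 0)) := by
      funext x'
      rw [Finset.sum_apply]
      simp only [Pi.smul_apply, smul_eq_mul]
      by_cases hsel : ystar x' j = y0
      · simp only [hsel, eq_self_iff_true, if_true, mul_one]
        have step1 : ∀ T ∈ Sᶜ.powerset, ((-1:ℝ))^T.card *
            ((∏ i ∈ S, if x' i = x i then (1:ℝ) else 0) *
              ∏ i ∈ T, if x' i = c0 i then (0:ℝ) else 1) =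
            (∏ i ∈ S, if x' i = x i then (1:ℝ) else 0) *
              ∏ i ∈ T, ((if x' i = c0 i then (0:ℝ) else -1)) := by
          intro T _
          rw [← Finset.prod_const (b := (-1:ℝ)), ← mul_assoc,
            mul_comm (∏ _i ∈ T, (-1:ℝ)) _, mul_assoc, ← Finset.prod_mul_distrib]
          congr 1
          exact Finset.prod_congr rfl fun i _ => by split_ifs <;> ring
        rw [Finset.sum_congr rfl step1, ← Finset.mul_sum]
        have step2 : ∑ T ∈ Sᶜ.powerset, ∏ i ∈ T, (if x' i = c0 i then (0:ℝ) else -1) =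
            ∏ i ∈ Sᶜ, (if x' i = c0 i then (1:ℝ) else 0) := by
          rw [show (fun i => if x' i = c0 i then (1:ℝ) else 0) =
              (fun i => (if x' i = c0 i then (0:ℝ) else -1) + 1) from
            funext fun i => by split_ifs <;> ring]
          rw [Finset.prod_add]
          exact Finset.sum_congr rfl fun T _ => by simp
        rw [step2]
        by_cases hxx : x' = x
        · subst hxx
          rw [Pi.single_eq_same]
          rw [Finset.prod_congr rfl (fun i hi => if_pos rfl),
            Finset.prod_congr rfl (fun i (hi : i ∈ Sᶜ) => if_pos (by
              have := Finset.mem_compl.1 hi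
              rw [hS] at this
              simp only [Finset.mem_filter, Finset.mem_univ, true_and, not_not] at this
              exact this))]
          simp
        · rw [Pi.single_eq_of_ne hxx]
          obtain ⟨i, hi⟩ := Function.ne_iff.1 hxx
          by_cases hiS : i ∈ S
          · rw [Finset.prod_eq_zero hiS (show (if x' i = x i then (1:ℝ) else 0) = 0 from if_neg hi)]
            ring
          · have hxc : x i = c0 i := by
              rw [hS] at hiS
              simp only [Finset.mem_filter, Finset.mem_univ, true_and, not_not] at hiS
              exact hiS
            have : x' i ≠ c0 i := by rw [← hxc]; exact hi
            rw [Finset.prod_eq_zero (Finset.mem_compl.2 hiS)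
              (show (if x' i = c0 i then (1:ℝ) else 0) = 0 from if_neg this)]
            ring
      · have hxx : x' ≠ x := by
          intro h
          exact hsel (by rw [h])
        rw [Pi.single_eq_of_ne hxx]
        rw [Finset.sum_eq_zero]
        intro T _
        rw [if_neg hsel]
        ring
    rw [hkey]
    refine Submodule.sum_mem _ fun T hT => Submodule.smul_mem _ _ ?_
    have hTsub : T ⊆ Sᶜ := Finset.mem_powerset.1 hT
    by_cases hcard : S.card + T.card ≤ k
    · refine mul_mem_span_prod A (fun t : Fin bn => fun x' => B t (ystar x')) ?_ ?_
      · rw [hA]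
        refine Submodule.subset_span ⟨S ∪ T, ?_, ?_⟩
        · exact le_trans (Finset.card_union_le S T) hcard
        · intro z z' hag
          simp only
          congr 1
          · exact Finset.prod_congr rfl fun i hi => by
              rw [hag i (Finset.mem_union_left _ hi)]
          · exact Finset.prod_congr rfl fun i hi => by
              rw [hag i (Finset.mem_union_right _ hi)]
      · exact comp_mem_span B ystar
          (by rw [hB]; exact single_coord_mem_Vk le_rfl j (fun t => if t = y0 then (1:ℝ) else 0))
    · have hzero : (fun x' => ((∏ i ∈ S, if x' i = x i then (1:ℝ) else 0) *
            ∏ i ∈ T, if x' i = c0 i then (0:ℝ) else 1) *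
            (if ystar x' j = y0 then (1:ℝ) else 0)) = (fun _ => (0:ℝ)) := by
        funext x'
        by_cases hsel : ystar x' j = y0
        · rw [if_pos hsel, mul_one]
          have hsel' : sel k c hr j x' = y0 := hsel
          have hcen' : ((sel k c hr j x' : Fin (r j)) : ℕ) < r j - 1 := by
            rw [hsel']; exact hcen
          have hd' : hammingDist x' (c j ⟨sel k c hr j x', hcen'⟩) ≤ k :=
            sel_center_dist k c hr j x' hcen'
          have hfe : (⟨((sel k c hr j x' : Fin (r j)) : ℕ), hcen'⟩ : Fin (r j - 1)) =
              ⟨(y0 : ℕ), hcen⟩ := by apply Fin.ext; simpa using congrArg Fin.val hsel'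
          rw [hfe] at hd'
          rw [← hc0] at hd'
          by_contra h0
          obtain ⟨hP1, hP2⟩ := mul_ne_zero_iff.1 h0
          have hall1 : ∀ i ∈ S, x' i ≠ c0 i := by
            intro i hiS
            have := Finset.prod_ne_zero_iff.1 hP1 i hiS
            have hx'x : x' i = x i := by
              by_contra hne
              exact this (if_neg hne)
            rw [hS] at hiS
            simp only [Finset.mem_filter, Finset.mem_univ, true_and] at hiS
            rw [hx'x]
            exact hiS
          have hall2 : ∀ i ∈ T, x' i ≠ c0 i := by
            intro i hiT
            have := Finset.prod_ne_zero_iff.1 hP2 i hiT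
            by_contra heq
            exact this (if_pos heq)
          have hsub : S ∪ T ⊆ Finset.univ.filter (fun i => x' i ≠ c0 i) := by
            intro i hi
            rcases Finset.mem_union.1 hi with hi' | hi'
            · exact Finset.mem_filter.2 ⟨Finset.mem_univ _, hall1 i hi'⟩
            · exact Finset.mem_filter.2 ⟨Finset.mem_univ _, hall2 i hi'⟩
          have hdisj : Disjoint S T := Finset.disjoint_left.2 fun i hiS hiT =>
            (Finset.mem_compl.1 (hTsub hiT)) hiS
          have hcard2 : S.card + T.card ≤ hammingDist x' c0 := by
            rw [show hammingDist x' c0 = (Finset.univ.filter fun i => x' i ≠ c0 i).card from rfl]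
            rw [← Finset.card_union_of_disjoint hdisj]
            exact Finset.card_le_card hsub
          exact hcard (le_trans hcard2 hd')
        · rw [if_neg hsel, mul_zero]
      rw [hzero]
      exact Submodule.zero_mem _
  have hspan : Submodule.span ℝ (Set.range (tropMat A B θ)) = ⊤ := by
    rw [htrop]
    rw [eq_top_iff]
    intro f _
    have hf : f = ∑ x : ∀ i, Fin (q i),
        (f x) • (Pi.single x (1:ℝ) : (∀ i, Fin (q i)) → ℝ) := by
      funext x'
      simp [Pi.single_apply]
    rw [hf]
    exact Submodule.sum_mem _ fun x _ => Submodule.smul_mem _ _ (hsingle x)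
  have hrank : (tropMat A B θ).rank = Fintype.card (∀ i, Fin (q i)) := by
    rw [Matrix.rank_eq_finrank_span_row, show (tropMat A B θ).row = tropMat A B θ from rfl, hspan, finrank_top]
    simp [Module.finrank_pi]
  constructor
  · exact ⟨θ, hrank.symm⟩
  · rintro s ⟨θ', rfl⟩
    exact Matrix.rank_le_card_width _
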